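/- Validity of the doubly robust value loss for V-restricted policy search: let g : ℋ × {0,1} → (0,1] be measurable with g(H, A) ≥ δ almost surely for some δ > 0, and Q : ℋ × {0,1} → ℝ measurable with Q(H, a) integrable for each a. If g = g₀ or Q = Q₀, then for every measurable d : 𝒱 → {0,1}, the expected value loss satisfies E[−Z(d ∘ f, g, Q)] ≥ E[−Z(d₀ⱽ ∘ f, g, Q)], where d₀ⱽ(v) = 1{B₀(v) > 0}; that is, the expected value loss over V-restricted policies is minimized at the optimal V-restricted policy d₀ⱽ. -/
import Mathlib


open MeasureTheory

private lemma pull_out_integral {Ω : Type*} {m0 : MeasurableSpace Ω} (μ : Measure Ω)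
    [IsProbabilityMeasure μ] {m : MeasurableSpace Ω} (hm : m ≤ m0)
    {c Y : Ω → ℝ} (hc : StronglyMeasurable[m] c)
    (hcY : Integrable (fun ω => c ω * Y ω) μ) (hY : Integrable Y μ) :
    ∫ ω, c ω * Y ω ∂μ = ∫ ω, c ω * (μ[Y|m]) ω ∂μ := by
  have h1 : μ[c * Y|m] =ᵐ[μ] c * μ[Y|m] :=
    condExp_mul_of_stronglyMeasurable_left hc hcY hY
  calc ∫ ω, c ω * Y ω ∂μ = ∫ ω, (μ[c * Y|m]) ω ∂μ := (integral_condExp hm).symm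
    _ = ∫ ω, (c * μ[Y|m]) ω ∂μ := integral_congr_ae h1
    _ = ∫ ω, c ω * (μ[Y|m]) ω ∂μ := rfl

/-- Validity of the doubly robust value loss for V-restricted policy search:
if `g = g₀` or `Q = Q₀`, then for every measurable `d : 𝒱 → {0,1}`,
`E[−Z(d ∘ f, g, Q)] ≥ E[−Z(d₀ⱽ ∘ f, g, Q)]` where `d₀ⱽ(v) = 1{B₀(v) > 0}`. -/
theorem value_loss_validity
    {Ω 𝓗 𝓥 : Type*} [MeasurableSpace Ω] [MeasurableSpace 𝓗] [MeasurableSpace 𝓥]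
    (μ : Measure Ω) [IsProbabilityMeasure μ]
    (H : Ω → 𝓗) (hH : Measurable H)
    (A : Ω → Bool) (hA : Measurable A)
    (U : Ω → ℝ) (hU : Integrable U μ)
    (g₀ : 𝓗 → Bool → ℝ) (hg₀m : ∀ a, Measurable fun h => g₀ h a)
    (hg₀01 : ∀ h a, g₀ h a ∈ Set.Icc (0:ℝ) 1)
    (hg₀cond : ∀ a : Bool, (fun ω => g₀ (H ω) a)
      =ᵐ[μ] μ[(fun ω => if A ω = a then (1:ℝ) else 0) | MeasurableSpace.comap H inferInstance])
    (ε : ℝ) (hε : 0 < ε)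
    (hpos : ∀ᵐ ω ∂μ, ε ≤ g₀ (H ω) (A ω))
    (Q₀ : 𝓗 → Bool → ℝ) (hQ₀m : ∀ a, Measurable fun h => Q₀ h a)
    (hQ₀int : ∀ a : Bool, Integrable (fun ω => Q₀ (H ω) a) μ)
    (hQ₀cond : ∀ a : Bool, (fun ω => g₀ (H ω) a * Q₀ (H ω) a)
      =ᵐ[μ] μ[(fun ω => (if A ω = a then (1:ℝ) else 0) * U ω)
              | MeasurableSpace.comap H inferInstance])
    -- restriction V = f(H)
    (f : 𝓗 → 𝓥) (hf : Measurable f)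
    (QV₀ : 𝓥 → Bool → ℝ) (hQV₀m : ∀ a, Measurable fun v => QV₀ v a)
    (hQV₀cond : ∀ a : Bool, (fun ω => QV₀ (f (H ω)) a)
      =ᵐ[μ] μ[(fun ω => Q₀ (H ω) a)
              | MeasurableSpace.comap (fun ω => f (H ω)) inferInstance])
    -- nuisance models
    (g : 𝓗 → Bool → ℝ) (hgm : ∀ a, Measurable fun h => g h a)
    (hg01 : ∀ h a, g h a ∈ Set.Ioc (0:ℝ) 1)
    (δ : ℝ) (hδ : 0 < δ) (hgpos : ∀ᵐ ω ∂μ, δ ≤ g (H ω) (A ω))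
    (Q : 𝓗 → Bool → ℝ) (hQm : ∀ a, Measurable fun h => Q h a)
    (hQint : ∀ a : Bool, Integrable (fun ω => Q (H ω) a) μ)
    (hgQ : g = g₀ ∨ Q = Q₀)
    -- the optimal V-restricted policy
    (d₀ : 𝓥 → Bool)
    (hd₀ : ∀ v, d₀ v = if 0 < QV₀ v true - QV₀ v false then true else false) :
    ∀ d : 𝓥 → Bool, Measurable d →
      ∫ ω, -(Q (H ω) (d (f (H ω)))
          + (if A ω = d (f (H ω)) then (1:ℝ) else 0) / g (H ω) (A ω)
            * (U ω - Q (H ω) (A ω))) ∂μ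
      ≥ ∫ ω, -(Q (H ω) (d₀ (f (H ω)))
          + (if A ω = d₀ (f (H ω)) then (1:ℝ) else 0) / g (H ω) (A ω)
            * (U ω - Q (H ω) (A ω))) ∂μ := by
  classical
  have hm : MeasurableSpace.comap H inferInstance ≤ ‹MeasurableSpace Ω› := hH.comap_le
  have hmV : MeasurableSpace.comap (fun ω => f (H ω)) inferInstance ≤ ‹MeasurableSpace Ω› :=
    (hf.comp hH).comap_le
  -- every map out of Bool into ℝ is measurable
  have hb2r : ∀ a : Bool, Measurable fun b : Bool => if b = a then (1:ℝ) else 0 :=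
    fun a => measurable_from_top
  have hAind : ∀ a : Bool, Measurable fun ω => (if A ω = a then (1:ℝ) else 0) :=
    fun a => (hb2r a).comp hA
  have hbd01 : ∀ (P : Prop) [Decidable P], ‖if P then (1:ℝ) else 0‖ ≤ 1 := by
    intro P _; split <;> simp
  have hιint : ∀ a : Bool, Integrable (fun ω => if A ω = a then (1:ℝ) else 0) μ := by
    intro a
    simpa using (integrable_const (1:ℝ)).bdd_mul (hAind a).aestronglyMeasurable
      (ae_of_all μ fun ω => hbd01 _)
  -- integrability of QV₀ ∘ V
  have hQVaint : ∀ a : Bool, Integrable (fun ω => QV₀ (f (H ω)) a) μ :=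
    fun a => integrable_condExp.congr (hQV₀cond a).symm
  -- the key identity: the DR value equals the value of the restricted Q-function
  have key : ∀ e : 𝓥 → Bool, Measurable e →
      ∫ ω, (Q (H ω) (e (f (H ω)))
          + (if A ω = e (f (H ω)) then (1:ℝ) else 0) / g (H ω) (A ω)
            * (U ω - Q (H ω) (A ω))) ∂μ
      = ∫ ω, QV₀ (f (H ω)) (e (f (H ω))) ∂μ := by
    intro e he
    -- measurability of the policy indicator
    have hχm : ∀ a : Bool, Measurable fun ω => (if e (f (H ω)) = a then (1:ℝ) else 0) :=
      fun a => (hb2r a).comp (he.comp (hf.comp hH))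
    have hχ_sm_m : ∀ a : Bool,
        StronglyMeasurable[MeasurableSpace.comap H inferInstance]
          (fun ω => if e (f (H ω)) = a then (1:ℝ) else 0) :=
      fun a => (((hb2r a).comp (he.comp hf)).comp (comap_measurable H)).stronglyMeasurable
    have hχ_sm_mV : ∀ a : Bool,
        StronglyMeasurable[MeasurableSpace.comap (fun ω => f (H ω)) inferInstance]
          (fun ω => if e (f (H ω)) = a then (1:ℝ) else 0) :=
      fun a => (((hb2r a).comp he).comp
        (comap_measurable (fun ω => f (H ω)))).stronglyMeasurable
    -- integrabilities
    have hχQ : ∀ a : Bool,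
        Integrable (fun ω => (if e (f (H ω)) = a then (1:ℝ) else 0) * Q (H ω) a) μ :=
      fun a => (hQint a).bdd_mul (hχm a).aestronglyMeasurable (ae_of_all μ fun ω => hbd01 _)
    have hχQ₀ : ∀ a : Bool,
        Integrable (fun ω => (if e (f (H ω)) = a then (1:ℝ) else 0) * Q₀ (H ω) a) μ :=
      fun a => (hQ₀int a).bdd_mul (hχm a).aestronglyMeasurable (ae_of_all μ fun ω => hbd01 _)
    have hχQV : ∀ a : Bool,
        Integrable (fun ω => (if e (f (H ω)) = a then (1:ℝ) else 0) * QV₀ (f (H ω)) a) μ :=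
      fun a => (hQVaint a).bdd_mul (hχm a).aestronglyMeasurable (ae_of_all μ fun ω => hbd01 _)
    have hYint : ∀ a : Bool,
        Integrable (fun ω => (if A ω = a then (1:ℝ) else 0) * (U ω - Q (H ω) a)) μ :=
      fun a => (hU.sub (hQint a)).bdd_mul (hAind a).aestronglyMeasurable
        (ae_of_all μ fun ω => hbd01 _)
    have hQιint : ∀ a : Bool,
        Integrable (fun ω => Q (H ω) a * (if A ω = a then (1:ℝ) else 0)) μ := by
      intro a
      exact ((hQint a).bdd_mul (hAind a).aestronglyMeasurable
        (ae_of_all μ fun ω => hbd01 _)).congr (ae_of_all μ fun ω => by ring)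
    have hcY : ∀ a : Bool,
        Integrable (fun ω => ((if e (f (H ω)) = a then (1:ℝ) else 0) / g (H ω) a)
          * ((if A ω = a then (1:ℝ) else 0) * (U ω - Q (H ω) a))) μ := by
      intro a
      have hre : (fun ω => ((if e (f (H ω)) = a then (1:ℝ) else 0) / g (H ω) a)
            * ((if A ω = a then (1:ℝ) else 0) * (U ω - Q (H ω) a)))
          = fun ω => ((if e (f (H ω)) = a then (1:ℝ) else 0)
            * (if A ω = a then (1:ℝ) else 0) / g (H ω) a) * (U ω - Q (H ω) a) := by
        funext ω; ring
      rw [hre]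
      refine (hU.sub (hQint a)).bdd_mul (c := 1/δ)
        (((hχm a).mul (hAind a)).div ((hgm a).comp hH)).aestronglyMeasurable ?_
      filter_upwards [hgpos] with ω hω
      by_cases hAa : A ω = a
      · have hg2 : 0 < g (H ω) a := (hg01 (H ω) a).1
        have hg1 : δ ≤ g (H ω) a := by rw [← hAa]; exact hω
        rw [Real.norm_eq_abs, abs_div, abs_mul, abs_of_pos hg2]
        have h1 : |if e (f (H ω)) = a then (1:ℝ) else 0| ≤ 1 := by split <;> simp
        have h2 : |if A ω = a then (1:ℝ) else 0| ≤ 1 := by split <;> simp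
        exact div_le_div₀ zero_le_one
          (le_trans (mul_le_one₀ h1 (abs_nonneg _) h2) le_rfl) hδ hg1
      · simp only [if_neg hAa, mul_zero, zero_div, norm_zero]
        positivity
    -- the conditional expectation of the residual term
    have hcond : ∀ a : Bool,
        (μ[(fun ω => (if A ω = a then (1:ℝ) else 0) * (U ω - Q (H ω) a))
            | MeasurableSpace.comap H inferInstance])
          =ᵐ[μ] fun ω => g₀ (H ω) a * (Q₀ (H ω) a - Q (H ω) a) := by
      intro a
      have h1 : (fun ω => (if A ω = a then (1:ℝ) else 0) * (U ω - Q (H ω) a))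
          = (fun ω => (if A ω = a then (1:ℝ) else 0) * U ω)
            - (fun ω => Q (H ω) a * (if A ω = a then (1:ℝ) else 0)) := by
        funext ω; simp only [Pi.sub_apply]
        by_cases hAa : A ω = a <;> simp [hAa]
      have hintA : Integrable (fun ω => (if A ω = a then (1:ℝ) else 0) * U ω) μ :=
        hU.bdd_mul (hAind a).aestronglyMeasurable (ae_of_all μ fun ω => hbd01 _)
      have hsub := condExp_sub (m := MeasurableSpace.comap H inferInstance)
        (μ := μ) hintA (hQιint a)
      have hB : (μ[(fun ω => Q (H ω) a * (if A ω = a then (1:ℝ) else 0))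
            | MeasurableSpace.comap H inferInstance])
          =ᵐ[μ] fun ω => Q (H ω) a * g₀ (H ω) a := by
        have hpull := condExp_mul_of_stronglyMeasurable_left
          (m := MeasurableSpace.comap H inferInstance) (μ := μ)
          (f := fun ω => Q (H ω) a) (g := fun ω => (if A ω = a then (1:ℝ) else 0))
          (((hQm a).comp (comap_measurable H)).stronglyMeasurable)
          (hQιint a) (hιint a)
        refine hpull.trans ?_
        filter_upwards [hg₀cond a] with ω hω
        simp only [Pi.mul_apply]
        rw [← hω]
      rw [h1]
      refine hsub.trans ?_
      filter_upwards [(hQ₀cond a).symm, hB] with ω hω1 hω2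
      simp only [Pi.sub_apply]
      rw [hω1, hω2]; ring
    -- integral of the residual term
    have hcorr : ∀ a : Bool,
        ∫ ω, ((if e (f (H ω)) = a then (1:ℝ) else 0) / g (H ω) a)
          * ((if A ω = a then (1:ℝ) else 0) * (U ω - Q (H ω) a)) ∂μ
        = ∫ ω, (if e (f (H ω)) = a then (1:ℝ) else 0)
            * (g₀ (H ω) a / g (H ω) a * (Q₀ (H ω) a - Q (H ω) a)) ∂μ := by
      intro a
      have hc : StronglyMeasurable[MeasurableSpace.comap H inferInstance]
          (fun ω => (if e (f (H ω)) = a then (1:ℝ) else 0) / g (H ω) a) :=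
        ((((hb2r a).comp (he.comp hf)).div (hgm a)).comp
          (comap_measurable H)).stronglyMeasurable
      have h₁ : ∫ ω, ((if e (f (H ω)) = a then (1:ℝ) else 0) / g (H ω) a)
            * ((if A ω = a then (1:ℝ) else 0) * (U ω - Q (H ω) a)) ∂μ
          = ∫ ω, ((if e (f (H ω)) = a then (1:ℝ) else 0) / g (H ω) a)
            * (μ[(fun ω => (if A ω = a then (1:ℝ) else 0) * (U ω - Q (H ω) a))
                | MeasurableSpace.comap H inferInstance]) ω ∂μ :=
        pull_out_integral μ hm hc (hcY a) (hYint a)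
      rw [h₁]
      refine integral_congr_ae ?_
      filter_upwards [hcond a] with ω hω
      rw [hω]; ring
    -- pointwise decomposition of the DR score
    have hsplit : ∀ ω, Q (H ω) (e (f (H ω)))
        + (if A ω = e (f (H ω)) then (1:ℝ) else 0) / g (H ω) (A ω)
          * (U ω - Q (H ω) (A ω))
      = ((if e (f (H ω)) = true then (1:ℝ) else 0) * Q (H ω) true
          + (if e (f (H ω)) = false then (1:ℝ) else 0) * Q (H ω) false)
        + (((if e (f (H ω)) = true then (1:ℝ) else 0) / g (H ω) true)
            * ((if A ω = true then (1:ℝ) else 0) * (U ω - Q (H ω) true))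
          + ((if e (f (H ω)) = false then (1:ℝ) else 0) / g (H ω) false)
            * ((if A ω = false then (1:ℝ) else 0) * (U ω - Q (H ω) false))) := by
      intro ω
      cases hA' : A ω <;> cases he' : e (f (H ω)) <;> simp [hA', he'] <;> ring
    -- the value identity up to the residuals
    have hsum : ∫ ω, (Q (H ω) (e (f (H ω)))
          + (if A ω = e (f (H ω)) then (1:ℝ) else 0) / g (H ω) (A ω)
            * (U ω - Q (H ω) (A ω))) ∂μ
        = ((∫ ω, (if e (f (H ω)) = true then (1:ℝ) else 0) * Q (H ω) true ∂μ)
            + ∫ ω, (if e (f (H ω)) = false then (1:ℝ) else 0) * Q (H ω) false ∂μ)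
          + ((∫ ω, ((if e (f (H ω)) = true then (1:ℝ) else 0) / g (H ω) true)
              * ((if A ω = true then (1:ℝ) else 0) * (U ω - Q (H ω) true)) ∂μ)
            + ∫ ω, ((if e (f (H ω)) = false then (1:ℝ) else 0) / g (H ω) false)
              * ((if A ω = false then (1:ℝ) else 0) * (U ω - Q (H ω) false)) ∂μ) := by
      have I12 : Integrable (fun ω => (if e (f (H ω)) = true then (1:ℝ) else 0) * Q (H ω) true
          + (if e (f (H ω)) = false then (1:ℝ) else 0) * Q (H ω) false) μ :=
        (hχQ true).add (hχQ false)
      have I34 : Integrable (fun ω => ((if e (f (H ω)) = true then (1:ℝ) else 0) / g (H ω) true)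
            * ((if A ω = true then (1:ℝ) else 0) * (U ω - Q (H ω) true))
          + ((if e (f (H ω)) = false then (1:ℝ) else 0) / g (H ω) false)
            * ((if A ω = false then (1:ℝ) else 0) * (U ω - Q (H ω) false))) μ :=
        (hcY true).add (hcY false)
      rw [integral_congr_ae (ae_of_all μ hsplit)]
      rw [integral_add I12 I34, integral_add (hχQ true) (hχQ false),
        integral_add (hcY true) (hcY false)]
    -- in both cases the value equals ∫ χ Q₀
    have hval : ∫ ω, (Q (H ω) (e (f (H ω)))
          + (if A ω = e (f (H ω)) then (1:ℝ) else 0) / g (H ω) (A ω)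
            * (U ω - Q (H ω) (A ω))) ∂μ
        = (∫ ω, (if e (f (H ω)) = true then (1:ℝ) else 0) * Q₀ (H ω) true ∂μ)
          + ∫ ω, (if e (f (H ω)) = false then (1:ℝ) else 0) * Q₀ (H ω) false ∂μ := by
      rw [hsum, hcorr true, hcorr false]
      rcases hgQ with hgg | hQQ
      · subst hgg
        have hfix : ∀ a : Bool, (fun ω => (if e (f (H ω)) = a then (1:ℝ) else 0)
              * (g (H ω) a / g (H ω) a * (Q₀ (H ω) a - Q (H ω) a)))
            = fun ω => (if e (f (H ω)) = a then (1:ℝ) else 0) * Q₀ (H ω) a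
              - (if e (f (H ω)) = a then (1:ℝ) else 0) * Q (H ω) a := by
          intro a; funext ω
          rw [div_self (ne_of_gt (hg01 (H ω) a).1)]; ring
        rw [hfix true, hfix false, integral_sub (hχQ₀ true) (hχQ true),
          integral_sub (hχQ₀ false) (hχQ false)]
        ring
      · subst hQQ
        have hzero : ∀ a : Bool, (fun ω => (if e (f (H ω)) = a then (1:ℝ) else 0)
              * (g₀ (H ω) a / g (H ω) a * (Q (H ω) a - Q (H ω) a)))
            = fun _ => (0:ℝ) := by
          intro a; funext ω; ring
        rw [hzero true, hzero false]
        simp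
    rw [hval]
    -- project Q₀ onto V
    have hIa : ∀ a : Bool,
        ∫ ω, (if e (f (H ω)) = a then (1:ℝ) else 0) * Q₀ (H ω) a ∂μ
        = ∫ ω, (if e (f (H ω)) = a then (1:ℝ) else 0) * QV₀ (f (H ω)) a ∂μ := by
      intro a
      have h₁ : ∫ ω, (if e (f (H ω)) = a then (1:ℝ) else 0) * Q₀ (H ω) a ∂μ
          = ∫ ω, (if e (f (H ω)) = a then (1:ℝ) else 0)
            * (μ[(fun ω => Q₀ (H ω) a)
                | MeasurableSpace.comap (fun ω => f (H ω)) inferInstance]) ω ∂μ :=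
        pull_out_integral μ hmV (hχ_sm_mV a) (hχQ₀ a) (hQ₀int a)
      rw [h₁]
      refine integral_congr_ae ?_
      filter_upwards [hQV₀cond a] with ω hω
      rw [← hω]
    rw [hIa true, hIa false, ← integral_add (hχQV true) (hχQV false)]
    refine integral_congr_ae (ae_of_all μ fun ω => ?_)
    cases he' : e (f (H ω)) <;> simp [he']
  -- measurability of d₀
  have hd₀m : Measurable d₀ := by
    have hrw : d₀ = fun v => if 0 < QV₀ v true - QV₀ v false then true else false :=
      funext hd₀
    rw [hrw]
    exact Measurable.ite
      (measurableSet_lt measurable_const ((hQV₀m true).sub (hQV₀m false)))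
      measurable_const measurable_const
  -- integrability of the projected value
  have hQVe : ∀ e : 𝓥 → Bool, Measurable e →
      Integrable (fun ω => QV₀ (f (H ω)) (e (f (H ω)))) μ := by
    intro e he
    have hrw : (fun ω => QV₀ (f (H ω)) (e (f (H ω))))
        = fun ω => (if e (f (H ω)) = true then (1:ℝ) else 0) * QV₀ (f (H ω)) true
          + (if e (f (H ω)) = false then (1:ℝ) else 0) * QV₀ (f (H ω)) false := by
      funext ω; cases he' : e (f (H ω)) <;> simp [he']
    rw [hrw]
    have hχm : ∀ a : Bool, Measurable fun ω => (if e (f (H ω)) = a then (1:ℝ) else 0) :=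
      fun a => (measurable_from_top (f := fun b : Bool => if b = a then (1:ℝ) else 0)).comp
        (he.comp (hf.comp hH))
    exact ((hQVaint true).bdd_mul (hχm true).aestronglyMeasurable
        (ae_of_all μ fun ω => hbd01 _)).add
      ((hQVaint false).bdd_mul (hχm false).aestronglyMeasurable
        (ae_of_all μ fun ω => hbd01 _))
  -- pointwise optimality of d₀
  have hpt : ∀ (d : 𝓥 → Bool) (v : 𝓥), QV₀ v (d v) ≤ QV₀ v (d₀ v) := by
    intro d v
    rw [hd₀ v]
    split_ifs with h
    · cases d v
      · simpa using le_of_lt (by linarith : QV₀ v false < QV₀ v true)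
      · exact le_rfl
    · cases d v
      · exact le_rfl
      · simpa using (by linarith : QV₀ v true ≤ QV₀ v false)
  intro d hd
  rw [ge_iff_le, integral_neg, integral_neg, neg_le_neg_iff, key d hd, key d₀ hd₀m]
  exact integral_mono (hQVe d hd) (hQVe d₀ hd₀m) (fun ω => hpt d (f (H ω)))
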